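/- Let Γ act freely (mod 0), ergodically, and measure-preservingly on (X,μ), let τ be an automorphism of Γ, and let T be an automorphism of the orbit relation whose rearrangement cocycle satisfies α_T(γ,x) = ζ_{γ·x}⁻¹ τ(γ) ζ_x for some measurable map x ↦ ζ_x ∈ Γ. Then the map A: X → X defined by A(x) = ζ_x · T(x) is a measure-preserving automorphism of (X,μ) satisfying A(γ·x) = τ(γ)·A(x), and T factors as T = A ∘ J where J(x) = ξ_x⁻¹·x with ξ_x = τ⁻¹(ζ_x) is an inner automorphism of the orbit relation. -/

import Mathlib

open MeasureTheory Set

private lemma meas_smul_comp {X : Type*} {Γ : Type*} [MeasurableSpace X] [Group Γ]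
    [Countable Γ] [MeasurableSpace Γ] [MeasurableSingletonClass Γ] [MulAction Γ X]
    (hmeas : ∀ γ : Γ, Measurable fun x : X => γ • x)
    {g : X → Γ} (hg : Measurable g) {f : X → X} (hf : Measurable f) :
    Measurable fun x => g x • f x := by
  intro M hM
  have : (fun x => g x • f x) ⁻¹' M
      = ⋃ γ : Γ, g ⁻¹' {γ} ∩ f ⁻¹' ((fun z => γ • z) ⁻¹' M) := by
    ext x
    simp only [mem_preimage, mem_iUnion, mem_inter_iff, mem_singleton_iff]
    exact ⟨fun h => ⟨g x, rfl, h⟩, fun ⟨γ, h1, h2⟩ => by rw [h1]; exact h2⟩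
  rw [this]
  exact MeasurableSet.iUnion fun γ =>
    (hg (measurableSet_singleton γ)).inter (hf ((hmeas γ) hM))

theorem cohomologous_to_twisted_factorization
    {X : Type*} [MeasurableSpace X] (μ : Measure X) [IsProbabilityMeasure μ]
    (Γ : Type*) [Group Γ] [Countable Γ] [MeasurableSpace Γ] [MeasurableSingletonClass Γ]
    [MulAction Γ X]
    (hmeas : ∀ γ : Γ, Measurable fun x : X => γ • x)
    (hmp : ∀ γ : Γ, MeasurePreserving (fun x : X => γ • x) μ μ)
    (hfree : ∀ᵐ x ∂μ, ∀ γ : Γ, γ • x = x → γ = 1)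
    (herg : ∀ A : Set X, MeasurableSet A → (∀ γ : Γ, (fun x : X => γ • x) ⁻¹' A = A) →
      μ A = 0 ∨ μ A = 1)
    (T : X ≃ᵐ X) (hT : MeasurePreserving T μ μ)
    (α : Γ → X → Γ)
    (hα : ∀ γ : Γ, ∀ᵐ x ∂μ, T (γ • x) = α γ x • T x)
    (τ : Γ ≃* Γ) (ζ : X → Γ) (hζ : Measurable ζ)
    (hcohom : ∀ γ : Γ, ∀ᵐ x ∂μ, α γ x = (ζ (γ • x))⁻¹ * τ γ * ζ x) :
    MeasurePreserving (fun x => ζ x • (T x)) μ μ ∧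
    (∀ γ : Γ, ∀ᵐ x ∂μ, ζ (γ • x) • T (γ • x) = τ γ • (ζ x • T x)) ∧
    (∀ᵐ x ∂μ, ζ ((τ.symm (ζ x))⁻¹ • x) • T ((τ.symm (ζ x))⁻¹ • x) = T x) ∧
    (∃ J : X ≃ᵐ X, MeasurePreserving J μ μ ∧ (∀ᵐ x ∂μ, J x = (τ.symm (ζ x))⁻¹ • x) ∧
      ∀ᵐ x ∂μ, ∃ γ : Γ, J x = γ • x) := by
  classical
  set A : X → X := fun x => ζ x • (T x) with hAdef
  have hA_meas : Measurable A := meas_smul_comp hmeas hζ T.measurable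
  -- ### Part 2 : equivariance
  have part2 : ∀ γ : Γ, ∀ᵐ x ∂μ, ζ (γ • x) • T (γ • x) = τ γ • (ζ x • T x) := by
    intro γ
    filter_upwards [hα γ, hcohom γ] with x h1 h2
    rw [h1, h2, smul_smul, smul_smul]
    congr 1
    group
  -- ### Part 3 : A ∘ J₀ = T a.e.
  have part3 : ∀ᵐ x ∂μ, ζ ((τ.symm (ζ x))⁻¹ • x) • T ((τ.symm (ζ x))⁻¹ • x) = T x := by
    filter_upwards [ae_all_iff.2 part2] with x hx
    have h2 := hx (τ.symm (ζ x))⁻¹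
    rwa [map_inv, MulEquiv.apply_symm_apply, inv_smul_smul] at h2
  -- ### A measurable full set on which part 3 holds pointwise
  obtain ⟨N, hNsub, hNmeas, hNnull⟩ := exists_measurable_superset_of_null (ae_iff.mp part3)
  set E : Set X := Nᶜ with hEdef
  have hEmeas : MeasurableSet E := hNmeas.compl
  have hEc : μ Eᶜ = 0 := by rwa [hEdef, compl_compl]
  have hE3 : ∀ x ∈ E, A ((τ.symm (ζ x))⁻¹ • x) = T x := by
    intro x hx
    by_contra h
    exact hx (hNsub h)
  have injE : ∀ x ∈ E, ∀ y ∈ E,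
      (τ.symm (ζ x))⁻¹ • x = (τ.symm (ζ y))⁻¹ • y → x = y := by
    intro x hx y hy h
    apply T.injective
    rw [← hE3 x hx, ← hE3 y hy, h]
  -- ### the level sets of ξ = τ⁻¹ ∘ ζ
  set S : Γ → Set X := fun γ => {x | τ.symm (ζ x) = γ} with hSdef
  have hξmeas : Measurable (fun x => τ.symm (ζ x)) :=
    (measurable_of_countable _).comp hζ
  have hSmeas : ∀ γ, MeasurableSet (S γ) := fun γ => hξmeas (measurableSet_singleton γ)
  -- ### image and preimage operations of J₀
  set img : Set X → Set X := fun M => ⋃ γ : Γ, (fun z => γ • z) ⁻¹' (S γ ∩ M) with himgdef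
  have himg_meas : ∀ M, MeasurableSet M → MeasurableSet (img M) := fun M hM =>
    MeasurableSet.iUnion fun γ => (hmeas γ) ((hSmeas γ).inter hM)
  have himg_null : ∀ M, MeasurableSet M → μ M = 0 → μ (img M) = 0 := by
    intro M hM h0
    refine measure_iUnion_null fun γ => ?_
    rw [(hmp γ).measure_preimage ((hSmeas γ).inter hM).nullMeasurableSet]
    exact measure_mono_null inter_subset_right h0
  set pre : Set X → Set X := fun M => (fun x => (τ.symm (ζ x))⁻¹ • x) ⁻¹' M with hpredef
  have hpre_eq : ∀ M, pre M = ⋃ γ : Γ, S γ ∩ (fun z => γ⁻¹ • z) ⁻¹' M := by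
    intro M; ext x
    simp only [hpredef, hSdef, mem_preimage, mem_iUnion, mem_inter_iff, mem_setOf_eq]
    exact ⟨fun h => ⟨τ.symm (ζ x), rfl, h⟩, fun ⟨γ, h1, h2⟩ => by rw [h1]; exact h2⟩
  have hpre_meas : ∀ M, MeasurableSet M → MeasurableSet (pre M) := by
    intro M hM; rw [hpre_eq]
    exact MeasurableSet.iUnion fun γ => (hSmeas γ).inter ((hmeas γ⁻¹) hM)
  have hpre_null : ∀ M, MeasurableSet M → μ M = 0 → μ (pre M) = 0 := by
    intro M hM h0; rw [hpre_eq]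
    refine measure_iUnion_null fun γ => ?_
    refine measure_mono_null inter_subset_right ?_
    rw [(hmp γ⁻¹).measure_preimage hM.nullMeasurableSet]
    exact h0
  -- ### μ (img E) = 1
  have hμE : μ E = 1 := by
    have h := measure_add_measure_compl (μ := μ) hEmeas
    rwa [hEc, add_zero, measure_univ] at h
  have hμimgE : μ (img E) = 1 := by
    have hdisj : Pairwise (Function.onFun Disjoint fun γ : Γ => (fun z => γ • z) ⁻¹' (S γ ∩ E)) := by
      intro γ δ hγδ
      refine Set.disjoint_left.2 fun z hz hz' => hγδ ?_
      have h1 : (τ.symm (ζ (γ • z)))⁻¹ • (γ • z) = z := by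
        rw [show τ.symm (ζ (γ • z)) = γ from hz.1, inv_smul_smul]
      have h2 : (τ.symm (ζ (δ • z)))⁻¹ • (δ • z) = z := by
        rw [show τ.symm (ζ (δ • z)) = δ from hz'.1, inv_smul_smul]
      have heq := injE _ hz.2 _ hz'.2 (h1.trans h2.symm)
      rw [← hz.1, heq, hz'.1]
    have h1 : μ (img E) = ∑' γ : Γ, μ ((fun z => γ • z) ⁻¹' (S γ ∩ E)) :=
      measure_iUnion hdisj fun γ => (hmeas γ) ((hSmeas γ).inter hEmeas)
    have h2 : ∀ γ : Γ, μ ((fun z => γ • z) ⁻¹' (S γ ∩ E)) = μ (S γ ∩ E) := fun γ =>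
      (hmp γ).measure_preimage ((hSmeas γ).inter hEmeas).nullMeasurableSet
    have h3 : μ (⋃ γ : Γ, S γ ∩ E) = ∑' γ : Γ, μ (S γ ∩ E) := by
      refine measure_iUnion ?_ fun γ => (hSmeas γ).inter hEmeas
      intro γ δ hγδ
      refine Set.disjoint_left.2 fun x hx hx' => hγδ ?_
      rw [← hx.1, hx'.1]
    have h4 : (⋃ γ : Γ, S γ ∩ E) = E := by
      ext x
      simp only [hSdef, mem_iUnion, mem_inter_iff, mem_setOf_eq]
      exact ⟨fun ⟨γ, _, h⟩ => h, fun h => ⟨τ.symm (ζ x), rfl, h⟩⟩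
    rw [h1]
    calc ∑' γ : Γ, μ ((fun z => γ • z) ⁻¹' (S γ ∩ E))
        = ∑' γ : Γ, μ (S γ ∩ E) := tsum_congr h2
      _ = μ E := by rw [← h3, h4]
      _ = 1 := hμE
  -- ### the invariant bad set
  set Bs : ℕ → Set X :=
    fun n => Nat.rec (Eᶜ ∪ (img E)ᶜ) (fun _ Bn => (Bn ∪ pre Bn) ∪ img Bn) n with hBsdef
  have hBs_meas : ∀ n, MeasurableSet (Bs n) := by
    intro n; induction n with
    | zero => exact hEmeas.compl.union (himg_meas E hEmeas).compl
    | succ n ih => exact (ih.union (hpre_meas _ ih)).union (himg_meas _ ih)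
  have hBs_null : ∀ n, μ (Bs n) = 0 := by
    intro n; induction n with
    | zero =>
      refine measure_union_null hEc ?_
      rw [measure_compl (himg_meas E hEmeas) (measure_ne_top μ _), measure_univ, hμimgE,
        tsub_self]
    | succ n ih =>
      exact measure_union_null (measure_union_null ih (hpre_null _ (hBs_meas n) ih))
        (himg_null _ (hBs_meas n) ih)
  set G : Set X := (⋃ n, Bs n)ᶜ with hGdef
  have hGmeas : MeasurableSet G := (MeasurableSet.iUnion hBs_meas).compl
  have hGc_null : μ Gᶜ = 0 := by
    rw [hGdef, compl_compl]
    exact measure_iUnion_null hBs_null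
  have hGE : G ⊆ E := by
    intro x hx
    by_contra h
    exact hx (mem_iUnion.2 ⟨0, Or.inl h⟩)
  have hJ0G : ∀ x ∈ G, (τ.symm (ζ x))⁻¹ • x ∈ G := by
    intro x hx hmem
    rw [mem_iUnion] at hmem
    obtain ⟨n, hn⟩ := hmem
    exact hx (mem_iUnion.2 ⟨n + 1, Or.inl (Or.inr hn)⟩)
  have hsurjG : ∀ x ∈ G, ∃ γ : Γ, γ • x ∈ S γ ∩ G := by
    intro x hx
    have hximg : x ∈ img E := by
      by_contra h
      exact hx (mem_iUnion.2 ⟨0, Or.inr h⟩)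
    rw [himgdef, mem_iUnion] at hximg
    obtain ⟨γ, hγ⟩ := hximg
    refine ⟨γ, hγ.1, fun hmem => ?_⟩
    rw [mem_iUnion] at hmem
    obtain ⟨n, hn⟩ := hmem
    exact hx (mem_iUnion.2 ⟨n + 1, Or.inr (mem_iUnion.2 ⟨γ, hγ.1, hn⟩)⟩)
  -- ### the pieces of the corrected map and its inverse
  set R : Γ → Set X := fun γ => (fun z => γ • z) ⁻¹' (S γ ∩ G) with hRdef
  have hRmeas : ∀ γ, MeasurableSet (R γ) := fun γ => (hmeas γ) ((hSmeas γ).inter hGmeas)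
  have hRsubG : ∀ γ, R γ ⊆ G := by
    intro γ z hz
    have h1 := hJ0G _ hz.2
    rwa [show τ.symm (ζ (γ • z)) = γ from hz.1, inv_smul_smul] at h1
  have hRdisj : ∀ γ δ : Γ, γ ≠ δ → ∀ z, z ∈ R γ → z ∈ R δ → False := by
    intro γ δ hγδ z hz hz'
    have h1 : (τ.symm (ζ (γ • z)))⁻¹ • (γ • z) = z := by
      rw [show τ.symm (ζ (γ • z)) = γ from hz.1, inv_smul_smul]
    have h2 : (τ.symm (ζ (δ • z)))⁻¹ • (δ • z) = z := by
      rw [show τ.symm (ζ (δ • z)) = δ from hz'.1, inv_smul_smul]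
    have heq := injE _ (hGE hz.2) _ (hGE hz'.2) (h1.trans h2.symm)
    apply hγδ
    rw [← hz.1, heq, hz'.1]
  set c : X → Γ := fun y => if h : ∃ γ, y ∈ R γ then h.choose else 1 with hcdef
  set d : X → Γ := fun x => if x ∈ G then (τ.symm (ζ x))⁻¹ else 1 with hddef
  have hc_spec : ∀ (y : X) (γ : Γ), y ∈ R γ → c y = γ := by
    intro y γ hy
    have hex : ∃ δ, y ∈ R δ := ⟨γ, hy⟩
    have h1 : c y = hex.choose := by
      show dite _ _ _ = _
      rw [dif_pos hex]
    rw [h1]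
    by_contra hne
    exact hRdisj _ _ hne y hex.choose_spec hy
  have hc_one : ∀ y, y ∉ G → c y = 1 := by
    intro y hy
    show dite _ _ _ = _
    exact dif_neg fun hex => hy (hRsubG _ hex.choose_spec)
  have hcG : ∀ y ∈ G, y ∈ R (c y) := by
    intro y hy
    have hex : ∃ δ, y ∈ R δ := hsurjG y hy
    have h1 : c y = hex.choose := by
      show dite _ _ _ = _
      rw [dif_pos hex]
    rw [h1]
    exact hex.choose_spec
  have hd_G : ∀ x ∈ G, d x = (τ.symm (ζ x))⁻¹ := fun x hx => if_pos hx
  have hd_nG : ∀ x, x ∉ G → d x = 1 := fun x hx => if_neg hx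
  -- ### inverse identities
  have hKJ : ∀ x, c (d x • x) • (d x • x) = x := by
    intro x
    by_cases hx : x ∈ G
    · rw [hd_G x hx]
      have hmem : (τ.symm (ζ x))⁻¹ • x ∈ R (τ.symm (ζ x)) := by
        show τ.symm (ζ x) • ((τ.symm (ζ x))⁻¹ • x) ∈ S (τ.symm (ζ x)) ∩ G
        rw [smul_inv_smul]
        exact ⟨rfl, hx⟩
      rw [hc_spec _ _ hmem, smul_inv_smul]
    · rw [hd_nG x hx, one_smul, hc_one x hx, one_smul]
  have hJK : ∀ y, d (c y • y) • (c y • y) = y := by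
    intro y
    by_cases hy : y ∈ G
    · have h1 : c y • y ∈ S (c y) ∩ G := hcG y hy
      rw [hd_G _ h1.2, show τ.symm (ζ (c y • y)) = c y from h1.1, inv_smul_smul]
    · rw [hc_one y hy, one_smul, hd_nG y hy, one_smul]
  -- ### measurability of c and d
  have hd_meas : Measurable d := by
    refine Measurable.ite hGmeas ?_ measurable_const
    exact (measurable_of_countable (fun γ : Γ => (τ.symm γ)⁻¹)).comp hζ
  have hc_meas : Measurable c := by
    apply measurable_to_countable'
    intro γ
    by_cases hγ : γ = 1
    · subst hγ
      have h1 : c ⁻¹' {1} = R 1 ∪ Gᶜ := by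
        ext y
        simp only [mem_preimage, mem_singleton_iff, mem_union, mem_compl_iff]
        constructor
        · intro h
          by_cases hy : y ∈ G
          · left
            have := hcG y hy
            rwa [h] at this
          · right; exact hy
        · rintro (h | h)
          · exact hc_spec y 1 h
          · exact hc_one y h
      rw [h1]
      exact (hRmeas 1).union hGmeas.compl
    · have h1 : c ⁻¹' {γ} = R γ := by
        ext y
        simp only [mem_preimage, mem_singleton_iff]
        constructor
        · intro h
          by_cases hy : y ∈ G
          · have := hcG y hy
            rwa [h] at this
          · exact absurd (h.symm.trans (hc_one y hy)) hγ
        · intro h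
          exact hc_spec y γ h
      rw [h1]
      exact hRmeas γ
  have hJf_meas : Measurable (fun x => d x • x) := meas_smul_comp hmeas hd_meas measurable_id
  have hKf_meas : Measurable (fun y => c y • y) := meas_smul_comp hmeas hc_meas measurable_id
  -- ### the corrected inner automorphism J
  set Jeq : X ≃ᵐ X :=
    { toFun := fun x => d x • x
      invFun := fun y => c y • y
      left_inv := hKJ
      right_inv := hJK
      measurable_toFun := hJf_meas
      measurable_invFun := hKf_meas } with hJeqdef
  -- ### measure preservation of J
  have hW : ∀ γ : Γ, (fun z => γ⁻¹ • z) ⁻¹' (d ⁻¹' {γ}) = c ⁻¹' {γ⁻¹} := by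
    intro γ
    ext z
    simp only [mem_preimage, mem_singleton_iff]
    constructor
    · intro h
      by_cases hz : γ⁻¹ • z ∈ G
      · rw [hd_G _ hz] at h
        have hξz : τ.symm (ζ (γ⁻¹ • z)) = γ⁻¹ := by
          have := congrArg Inv.inv h
          rwa [inv_inv] at this
        exact hc_spec z γ⁻¹ ⟨hξz, hz⟩
      · rw [hd_nG _ hz] at h
        have hzG : z ∉ G := by
          rw [← h] at hz
          simpa using hz
        rw [hc_one z hzG, ← h, inv_one]
    · intro h
      by_cases hz : z ∈ G
      · have hzr := hcG z hz
        rw [h] at hzr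
        have h1 : γ⁻¹ • z ∈ S γ⁻¹ ∩ G := hzr
        rw [hd_G _ h1.2, show τ.symm (ζ (γ⁻¹ • z)) = γ⁻¹ from h1.1, inv_inv]
      · rw [hc_one z hz] at h
        have hγ1 : γ = 1 := inv_eq_one.mp h.symm
        subst hγ1
        rw [inv_one, one_smul, hd_nG z hz]
  have hkey : ∀ M : Set X, MeasurableSet M → μ ((fun x => d x • x) ⁻¹' M) = μ M := by
    intro M hM
    have hWmeas : ∀ γ : Γ, MeasurableSet ((fun z => γ⁻¹ • z) ⁻¹' (d ⁻¹' {γ})) :=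
      fun γ => (hmeas γ⁻¹) (hd_meas (measurableSet_singleton γ))
    have hsplit : (fun x => d x • x) ⁻¹' M
        = ⋃ γ : Γ, (fun z => γ • z) ⁻¹' ((fun z => γ⁻¹ • z) ⁻¹' (d ⁻¹' {γ}) ∩ M) := by
      ext x
      simp only [mem_preimage, mem_iUnion, mem_inter_iff, mem_singleton_iff, inv_smul_smul]
      exact ⟨fun h => ⟨d x, rfl, h⟩, fun ⟨γ, h1, h2⟩ => by rw [h1]; exact h2⟩
    have hdisj : Pairwise (Function.onFun Disjoint fun γ : Γ =>
        (fun z => γ • z) ⁻¹' ((fun z => γ⁻¹ • z) ⁻¹' (d ⁻¹' {γ}) ∩ M)) := by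
      intro γ δ hγδ
      refine Set.disjoint_left.2 fun x hx hx' => hγδ ?_
      have h1 : d x = γ := by
        have := hx.1
        rwa [mem_preimage, mem_preimage, inv_smul_smul, mem_singleton_iff] at this
      have h2 : d x = δ := by
        have := hx'.1
        rwa [mem_preimage, mem_preimage, inv_smul_smul, mem_singleton_iff] at this
      rw [← h1, h2]
    rw [hsplit, measure_iUnion hdisj fun γ => (hmeas γ) ((hWmeas γ).inter hM)]
    have hterm : ∀ γ : Γ,
        μ ((fun z => γ • z) ⁻¹' ((fun z => γ⁻¹ • z) ⁻¹' (d ⁻¹' {γ}) ∩ M))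
          = μ (c ⁻¹' {γ⁻¹} ∩ M) := by
      intro γ
      rw [(hmp γ).measure_preimage ((hWmeas γ).inter hM).nullMeasurableSet, hW γ]
    have hcdisj : Pairwise (Function.onFun Disjoint fun γ : Γ => c ⁻¹' {γ⁻¹} ∩ M) := by
      intro γ δ hγδ
      refine Set.disjoint_left.2 fun z hz hz' => hγδ ?_
      have h1 : c z = γ⁻¹ := hz.1
      have h2 : c z = δ⁻¹ := hz'.1
      have : γ⁻¹ = δ⁻¹ := by rw [← h1, h2]
      exact inv_injective this
    have hcuniv : (⋃ γ : Γ, c ⁻¹' {γ⁻¹} ∩ M) = M := by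
      ext z
      simp only [mem_iUnion, mem_inter_iff, mem_preimage, mem_singleton_iff]
      exact ⟨fun ⟨γ, _, h⟩ => h, fun h => ⟨(c z)⁻¹, (inv_inv (c z)).symm, h⟩⟩
    calc ∑' γ : Γ, μ ((fun z => γ • z) ⁻¹' ((fun z => γ⁻¹ • z) ⁻¹' (d ⁻¹' {γ}) ∩ M))
        = ∑' γ : Γ, μ (c ⁻¹' {γ⁻¹} ∩ M) := tsum_congr hterm
      _ = μ (⋃ γ : Γ, c ⁻¹' {γ⁻¹} ∩ M) :=
          (measure_iUnion hcdisj fun γ =>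
            (hc_meas (measurableSet_singleton γ⁻¹)).inter hM).symm
      _ = μ M := by rw [hcuniv]
  have hmapJ : Measure.map (fun x => d x • x) μ = μ := by
    apply Measure.ext
    intro M hM
    rw [Measure.map_apply hJf_meas hM]
    exact hkey M hM
  have hJmp : MeasurePreserving (⇑Jeq) μ μ := ⟨hJf_meas, hmapJ⟩
  -- ### a.e. membership in G
  have hGae : ∀ᵐ x ∂μ, x ∈ G := by
    rw [ae_iff]
    exact hGc_null
  -- ### Part 1 : A is measure preserving
  have hAJ : (fun x => A (d x • x)) =ᶠ[ae μ] ⇑T := by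
    filter_upwards [hGae] with x hx
    rw [hd_G x hx]
    exact hE3 x (hGE hx)
  have part1 : MeasurePreserving A μ μ := by
    refine ⟨hA_meas, ?_⟩
    calc Measure.map A μ
        = Measure.map A (Measure.map (fun x => d x • x) μ) := by rw [hmapJ]
      _ = Measure.map (A ∘ fun x => d x • x) μ := Measure.map_map hA_meas hJf_meas
      _ = Measure.map (⇑T) μ := Measure.map_congr hAJ
      _ = μ := hT.map_eq
  refine ⟨part1, part2, part3, Jeq, hJmp, ?_, ?_⟩
  · filter_upwards [hGae] with x hx
    show d x • x = (τ.symm (ζ x))⁻¹ • x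
    rw [hd_G x hx]
  · exact Filter.Eventually.of_forall fun x => ⟨d x, rfl⟩
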